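/- Let G be a group, R a unital ring, and {α_g, D_g} a unital partial action of G on R such that (a) D_g D_h = (0) for all g ≠ h with g, h ≠ e, and (b) the set {1_g : g ∈ G} of identities of the ideals D_g is finite. Then for any normal subgroup N of G, the induced G/N-grading of the unital partial skew group ring R ⋆_α G is an epsilon-crossed product: for each coset C, the component S_C contains an epsilon-invertible element s (i.e., there exists t ∈ S_{C^{-1}} with st = ε_C and ts = ε_{C^{-1}}). -/

import Mathlib

open scoped Classical

noncomputable section

/-- The underlying additive group of the partial skew group ring `R ⋆_α G = ⊕_g D_g δ_g`,
realized as finitely supported functions `G → R`. Here the unital ideal `D_g` is encoded by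
its (central idempotent) identity element `e1 g`, as `D_g = e1 g * R`. -/
abbrev SkewA (G R : Type*) [Group G] [Ring R] : Type _ := Π₀ _ : G, R

/-- The multiplication of the partial skew group ring:
`(a δ_g)(b δ_h) = a α_g(b 1_{g⁻¹}) δ_{gh}`. -/
def mulA {G R : Type*} [Group G] [DecidableEq G] [Ring R]
    (e1 : G → R) (α : G → R → R) (x y : SkewA G R) : SkewA G R :=
  x.sum fun g a => y.sum fun h b => DFinsupp.single (g * h) (a * α g (b * e1 g⁻¹))

/-- The additive subgroup generated by products `u * v`, `u ∈ U`, `v ∈ V`, with respect to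
the skew multiplication. -/
def mulSubA {G R : Type*} [Group G] [DecidableEq G] [Ring R]
    (e1 : G → R) (α : G → R → R) (U V : AddSubgroup (SkewA G R)) :
    AddSubgroup (SkewA G R) :=
  AddSubgroup.closure (Set.image2 (mulA e1 α) (U : Set (SkewA G R)) (V : Set (SkewA G R)))

/-- The component `S_C = ⊕_{g ∈ C} D_g δ_g` of the induced `G/N`-grading. -/
def SC {G R : Type*} [Group G] [DecidableEq G] [Ring R]
    (e1 : G → R) (N : Subgroup G) (C : G ⧸ N) : AddSubgroup (SkewA G R) :=
  AddSubgroup.closure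
    {x | ∃ (g : G) (a : R), (g : G ⧸ N) = C ∧ e1 g * a = a ∧ x = DFinsupp.single g a}

namespace Stmt19Aux

variable {G R : Type*} [Group G] [DecidableEq G] [Ring R]
variable {e1 : G → R} {α : G → R → R}

lemma mulA_single_single (h0 : ∀ g : G, α g 0 = 0) (g h : G) (a b : R) :
    mulA e1 α (DFinsupp.single g a) (DFinsupp.single h b)
      = DFinsupp.single (g * h) (a * α g (b * e1 g⁻¹)) := by
  rw [mulA, DFinsupp.sum_single_index (by simp [DFinsupp.sum])]
  rw [DFinsupp.sum_single_index (by simp [h0])]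

lemma mulA_zero_left (y : SkewA G R) : mulA e1 α 0 y = 0 :=
  DFinsupp.sum_zero_index

lemma mulA_zero_right (x : SkewA G R) : mulA e1 α x 0 = 0 := by
  rw [mulA]
  simp [DFinsupp.sum_zero_index]

lemma mulA_add_left (x x' y : SkewA G R) :
    mulA e1 α (x + x') y = mulA e1 α x y + mulA e1 α x' y := by
  rw [mulA, mulA, mulA]
  refine DFinsupp.sum_add_index (fun g => by simp [DFinsupp.sum]) (fun g a a' => ?_)
  rw [← DFinsupp.sum_add]
  congr 1
  funext h b
  rw [add_mul, DFinsupp.single_add]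

lemma mulA_add_right (h0 : ∀ g : G, α g 0 = 0)
    (hadd' : ∀ (g : G) (x y : R),
      α g (x * e1 g⁻¹ + y * e1 g⁻¹) = α g (x * e1 g⁻¹) + α g (y * e1 g⁻¹))
    (x y y' : SkewA G R) :
    mulA e1 α x (y + y') = mulA e1 α x y + mulA e1 α x y' := by
  rw [mulA, mulA, mulA, ← DFinsupp.sum_add]
  congr 1
  funext g a
  refine DFinsupp.sum_add_index (fun h => by simp [h0]) (fun h b b' => ?_)
  rw [add_mul, hadd', mul_add, DFinsupp.single_add]

lemma mulA_sum_left {ι : Type*} (s : Finset ι) (f : ι → SkewA G R) (y : SkewA G R) :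
    mulA e1 α (∑ i ∈ s, f i) y = ∑ i ∈ s, mulA e1 α (f i) y := by
  classical
  induction s using Finset.induction_on with
  | empty => simp [mulA_zero_left]
  | insert _ _ hns ih => rw [Finset.sum_insert hns, Finset.sum_insert hns, mulA_add_left, ih]

lemma mulA_sum_right (h0 : ∀ g : G, α g 0 = 0)
    (hadd' : ∀ (g : G) (x y : R),
      α g (x * e1 g⁻¹ + y * e1 g⁻¹) = α g (x * e1 g⁻¹) + α g (y * e1 g⁻¹))
    {ι : Type*} (s : Finset ι) (f : ι → SkewA G R) (x : SkewA G R) :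
    mulA e1 α x (∑ i ∈ s, f i) = ∑ i ∈ s, mulA e1 α x (f i) := by
  classical
  induction s using Finset.induction_on with
  | empty => simp [mulA_zero_right]
  | insert _ _ hns ih =>
      rw [Finset.sum_insert hns, Finset.sum_insert hns, mulA_add_right h0 hadd', ih]

variable (e1 α) in
def Rhom (w : SkewA G R) : SkewA G R →+ SkewA G R :=
  AddMonoidHom.mk' (fun u => mulA e1 α u w) (fun a b => mulA_add_left a b w)

variable (e1 α) in
def Lhom (h0 : ∀ g : G, α g 0 = 0)
    (hadd' : ∀ (g : G) (x y : R),
      α g (x * e1 g⁻¹ + y * e1 g⁻¹) = α g (x * e1 g⁻¹) + α g (y * e1 g⁻¹))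
    (w : SkewA G R) : SkewA G R →+ SkewA G R :=
  AddMonoidHom.mk' (fun u => mulA e1 α w u) (fun a b => mulA_add_right h0 hadd' w a b)

variable (e1 α) in
def fixSub (h0 : ∀ g : G, α g 0 = 0)
    (hadd' : ∀ (g : G) (x y : R),
      α g (x * e1 g⁻¹ + y * e1 g⁻¹) = α g (x * e1 g⁻¹) + α g (y * e1 g⁻¹))
    (w : SkewA G R) : AddSubgroup (SkewA G R) :=
  (Lhom e1 α h0 hadd' w - AddMonoidHom.id _).ker ⊓ (Rhom e1 α w - AddMonoidHom.id _).ker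

lemma mem_fixSub {h0} {hadd'} {w z : SkewA G R} :
    z ∈ fixSub e1 α h0 hadd' w ↔ mulA e1 α w z = z ∧ mulA e1 α z w = z := by
  simp [fixSub, AddMonoidHom.mem_ker, sub_eq_zero, Lhom, Rhom, AddMonoidHom.sub_apply,
    AddMonoidHom.mk'_apply]

end Stmt19Aux

open Stmt19Aux

/-- Let `{α_g, D_g}` be a unital partial action of `G` on a unital ring `R` (with `D_g` the
unital ideal with central identity `1_g = e1 g`) such that (a) `D_g D_h = 0` for `g ≠ h`,
`g, h ≠ e`, and (b) `{1_g : g ∈ G}` is finite. Then for any normal subgroup `N` of `G` the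
induced `G/N`-grading of `R ⋆_α G` is an epsilon-crossed product: each component `S_C`
contains an epsilon-invertible element `s`, i.e. there is `t ∈ S_{C⁻¹}` with `s t = ε_C`
(the identity of `S_C S_{C⁻¹}`) and `t s = ε_{C⁻¹}` (the identity of `S_{C⁻¹} S_C`). -/
theorem stmt19 {G : Type*} [Group G] [DecidableEq G] {R : Type*} [Ring R]
    (e1 : G → R) (α : G → R → R)
    (he1idem : ∀ g : G, e1 g * e1 g = e1 g)
    (he1central : ∀ g : G, ∀ r : R, e1 g * r = r * e1 g)
    (he1one : e1 (1 : G) = 1)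
    (halphaone : ∀ x : R, α 1 x = x)
    (hrange : ∀ g : G, ∀ x : R, e1 g * α g (e1 g⁻¹ * x) = α g (e1 g⁻¹ * x))
    (hadd : ∀ g : G, ∀ x y : R,
      α g (e1 g⁻¹ * x + e1 g⁻¹ * y) = α g (e1 g⁻¹ * x) + α g (e1 g⁻¹ * y))
    (hmul : ∀ g : G, ∀ x y : R,
      α g ((e1 g⁻¹ * x) * (e1 g⁻¹ * y)) = α g (e1 g⁻¹ * x) * α g (e1 g⁻¹ * y))
    (hinv : ∀ g : G, ∀ x : R, α g⁻¹ (α g (e1 g⁻¹ * x)) = e1 g⁻¹ * x)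
    (hcond2 : ∀ g h : G, α g (e1 g⁻¹ * e1 h) = e1 g * e1 (g * h))
    (hcond3 : ∀ g h : G, ∀ x : R,
      α g (α h (e1 h⁻¹ * (e1 (g * h)⁻¹ * x))) = α (g * h) (e1 h⁻¹ * (e1 (g * h)⁻¹ * x)))
    (horth : ∀ g h : G, g ≠ h → g ≠ 1 → h ≠ 1 → e1 g * e1 h = 0)
    (hfin : (Set.range e1).Finite)
    (N : Subgroup G) [N.Normal] :
    ∀ C : G ⧸ N, ∃ s ∈ SC e1 N C, ∃ t ∈ SC e1 N C⁻¹,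
      (∀ z ∈ mulSubA e1 α (SC e1 N C) (SC e1 N C⁻¹),
        mulA e1 α (mulA e1 α s t) z = z ∧ mulA e1 α z (mulA e1 α s t) = z) ∧
      (∀ z ∈ mulSubA e1 α (SC e1 N C⁻¹) (SC e1 N C),
        mulA e1 α (mulA e1 α t s) z = z ∧ mulA e1 α z (mulA e1 α t s) = z) := by
  classical
  -- basic consequences
  have h0 : ∀ g : G, α g 0 = 0 := by
    intro g
    have h := hadd g 0 0
    simp only [mul_zero, add_zero] at h
    exact (left_eq_add.mp h)
  have hadd' : ∀ (g : G) (x y : R),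
      α g (x * e1 g⁻¹ + y * e1 g⁻¹) = α g (x * e1 g⁻¹) + α g (y * e1 g⁻¹) := by
    intro g x y
    rw [← he1central g⁻¹ x, ← he1central g⁻¹ y]
    exact hadd g x y
  have hez : ∀ g : G, e1 g = 0 → e1 g⁻¹ = 0 := by
    intro g hg
    have h := hcond2 g⁻¹ g
    rw [inv_inv, hg] at h
    simpa [h0, he1one] using h.symm
  -- e1 (g*h) absorbs products a δ_g · b δ_h
  have hc_k : ∀ (g h : G) (a b : R), e1 h * b = b →
      e1 (g * h) * (a * α g (b * e1 g⁻¹)) = a * α g (b * e1 g⁻¹) := by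
    intro g h a b hb
    have hcom : b * e1 g⁻¹ = e1 g⁻¹ * b := (he1central g⁻¹ b).symm
    have h2 : (e1 g⁻¹ * e1 h) * (e1 g⁻¹ * b) = e1 g⁻¹ * b := by
      calc (e1 g⁻¹ * e1 h) * (e1 g⁻¹ * b)
          = e1 g⁻¹ * ((e1 h * e1 g⁻¹) * b) := by rw [mul_assoc, ← mul_assoc (e1 h)]
        _ = e1 g⁻¹ * (e1 g⁻¹ * (e1 h * b)) := by rw [he1central h, mul_assoc]
        _ = (e1 g⁻¹ * e1 g⁻¹) * b := by rw [hb, ← mul_assoc]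
        _ = e1 g⁻¹ * b := by rw [he1idem]
    have h3 := hmul g (e1 h) b
    rw [h2, hcond2] at h3
    -- h3 : α g (e1 g⁻¹ * b) = e1 g * e1 (g*h) * α g (e1 g⁻¹ * b)
    rw [hcom]
    have h4 : e1 (g * h) * α g (e1 g⁻¹ * b) = α g (e1 g⁻¹ * b) := by
      conv_lhs => rw [h3]
      rw [← mul_assoc, ← mul_assoc, he1central (g * h) (e1 g), mul_assoc (e1 g), he1idem,
        ← h3]
    rw [← mul_assoc, he1central (g * h) a, mul_assoc, h4]
  -- vanishing of cross products
  have hc_zero : ∀ (g h : G) (b : R), e1 h * b = b → g⁻¹ ≠ h → g ≠ 1 → h ≠ 1 →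
      α g (b * e1 g⁻¹) = 0 := by
    intro g h b hb hne hg hh
    have hz : b * e1 g⁻¹ = 0 := by
      calc b * e1 g⁻¹ = e1 g⁻¹ * b := (he1central g⁻¹ b).symm
        _ = e1 g⁻¹ * (e1 h * b) := by rw [hb]
        _ = (e1 g⁻¹ * e1 h) * b := (mul_assoc _ _ _).symm
        _ = 0 := by rw [horth g⁻¹ h hne (inv_ne_one.mpr hg) hh, zero_mul]
    rw [hz, h0]
  -- the set of nontrivial group elements with nonzero idempotent is finite
  have hF : {g : G | g ≠ 1 ∧ e1 g ≠ 0}.Finite := by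
    apply Set.Finite.of_finite_image (f := e1)
    · exact hfin.subset (Set.image_subset_range _ _)
    · intro g hg h hh hgh
      by_contra hne
      have h2 := horth g h hne hg.1 hh.1
      rw [hgh, he1idem] at h2
      exact hh.2 h2
  set T : (G ⧸ N) → Finset G :=
    fun D => hF.toFinset.filter (fun g => (g : G ⧸ N) = D) with hT
  set E : (G ⧸ N) → R := fun D => ∑ g ∈ T D, e1 g with hE
  set sc : (G ⧸ N) → SkewA G R :=
    fun D => ∑ g ∈ T D, DFinsupp.single g (e1 g) with hsc
  have hTmem : ∀ (D : G ⧸ N) (g : G),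
      g ∈ T D ↔ (g ≠ 1 ∧ e1 g ≠ 0 ∧ (g : G ⧸ N) = D) := by
    intro D g
    simp [hT, Finset.mem_filter, Set.Finite.mem_toFinset, and_assoc]
  have hscmem : ∀ D : G ⧸ N, sc D ∈ SC e1 N D := by
    intro D
    refine AddSubgroup.sum_mem _ fun g hg => AddSubgroup.subset_closure ?_
    exact ⟨g, e1 g, ((hTmem D g).mp hg).2.2, he1idem g, rfl⟩
  have hEc : ∀ (D : G ⧸ N) (g : G) (c : R), g ∈ T D → e1 g * c = c → E D * c = c := by
    intro D g c hg hc
    rw [hE]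
    simp only
    rw [Finset.sum_mul]
    have hs := Finset.sum_eq_single_of_mem (f := fun g' => e1 g' * c) g hg ?_
    · exact hs.trans hc
    · intro g' hg' hne
      have h1 := (hTmem D g').mp hg'
      have h2 := (hTmem D g).mp hg
      show e1 g' * c = 0
      rw [← hc, ← mul_assoc, horth g' g hne h1.1 h2.1, zero_mul]
  have hinvT : ∀ (D : G ⧸ N) (g : G), g ∈ T D → g⁻¹ ∈ T D⁻¹ := by
    intro D g hg
    obtain ⟨h1, h2, h3⟩ := (hTmem D g).mp hg
    refine (hTmem D⁻¹ g⁻¹).mpr ⟨inv_ne_one.mpr h1, fun hz => h2 ?_, by rw [← h3]; rfl⟩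
    have h4 := hez g⁻¹ hz
    rwa [inv_inv] at h4
  -- product of the partial identities
  have hprod : ∀ D : G ⧸ N, D ≠ 1 →
      mulA e1 α (sc D) (sc D⁻¹) = DFinsupp.single 1 (E D) := by
    intro D hD
    rw [hsc]
    simp only
    rw [mulA_sum_left]
    have hinner : ∀ g ∈ T D,
        mulA e1 α (DFinsupp.single g (e1 g)) (∑ h ∈ T D⁻¹, DFinsupp.single h (e1 h))
          = DFinsupp.single 1 (e1 g) := by
      intro g hg
      rw [mulA_sum_right h0 hadd']
      obtain ⟨hg1, hg0, hgC⟩ := (hTmem D g).mp hg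
      rw [Finset.sum_eq_single_of_mem g⁻¹ (hinvT D g hg) ?_]
      · rw [mulA_single_single h0, mul_inv_cancel]
        congr 1
        rw [hcond2 g g⁻¹, mul_inv_cancel, he1one, mul_one, he1idem]
      · intro h hh hne
        obtain ⟨hh1, hh0, hhC⟩ := (hTmem D⁻¹ h).mp hh
        rw [mulA_single_single h0]
        rw [hc_zero g h (e1 h) (he1idem h) (fun e => hne e.symm) hg1 hh1, mul_zero,
          DFinsupp.single_zero]
    rw [Finset.sum_congr rfl hinner, hE]
    simp only
    exact (map_sum (DFinsupp.singleAddHom (fun _ : G => R) 1) _ _).symm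
  -- lifting the core computation to the whole of S_C S_{C'}
  have lift : ∀ (w : SkewA G R) (D D' : G ⧸ N),
      (∀ (g : G) (a : R), (g : G ⧸ N) = D → e1 g * a = a →
        ∀ (h : G) (b : R), (h : G ⧸ N) = D' → e1 h * b = b →
          mulA e1 α (DFinsupp.single g a) (DFinsupp.single h b)
            ∈ fixSub e1 α h0 hadd' w) →
      ∀ z ∈ mulSubA e1 α (SC e1 N D) (SC e1 N D'),
        mulA e1 α w z = z ∧ mulA e1 α z w = z := by
    intro w D D' core
    have inner : ∀ (h : G) (b : R), (h : G ⧸ N) = D' → e1 h * b = b →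
        ∀ u ∈ SC e1 N D,
          mulA e1 α u (DFinsupp.single h b) ∈ fixSub e1 α h0 hadd' w := by
      intro h b hh hb
      have hle : SC e1 N D ≤ AddSubgroup.comap
          (Rhom e1 α (DFinsupp.single h b)) (fixSub e1 α h0 hadd' w) := by
        rw [SC]
        refine (AddSubgroup.closure_le _).mpr ?_
        rintro x ⟨g, a, hg, ha, rfl⟩
        exact AddSubgroup.mem_comap.mpr (core g a hg ha h b hh hb)
      intro u hu
      exact AddSubgroup.mem_comap.mp (hle hu)
    have step : ∀ u ∈ SC e1 N D, ∀ v ∈ SC e1 N D',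
        mulA e1 α u v ∈ fixSub e1 α h0 hadd' w := by
      intro u hu
      have hle : SC e1 N D' ≤ AddSubgroup.comap
          (Lhom e1 α h0 hadd' u) (fixSub e1 α h0 hadd' w) := by
        rw [SC]
        refine (AddSubgroup.closure_le _).mpr ?_
        rintro x ⟨h, b, hh, hb, rfl⟩
        exact AddSubgroup.mem_comap.mpr (inner h b hh hb u hu)
      intro v hv
      exact AddSubgroup.mem_comap.mp (hle hv)
    intro z hz
    have hle : mulSubA e1 α (SC e1 N D) (SC e1 N D') ≤ fixSub e1 α h0 hadd' w := by
      rw [mulSubA]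
      refine (AddSubgroup.closure_le _).mpr ?_
      rintro x ⟨u, hu, v, hv, rfl⟩
      exact step u hu v hv
    exact mem_fixSub.mp (hle hz)
  have hEcen : ∀ (D : G ⧸ N) (r : R), E D * r = r * E D := by
    intro D r
    rw [hE]
    simp only
    rw [Finset.sum_mul, Finset.mul_sum]
    exact Finset.sum_congr rfl fun g _ => he1central g r
  -- the fixed-point property for nontrivial cosets
  have hfix : ∀ D : G ⧸ N, D ≠ 1 →
      ∀ z ∈ mulSubA e1 α (SC e1 N D) (SC e1 N D⁻¹),
        mulA e1 α (DFinsupp.single 1 (E D)) z = z ∧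
        mulA e1 α z (DFinsupp.single 1 (E D)) = z := by
    intro D hD
    refine lift _ D D⁻¹ ?_
    intro g a hgC ha h b hhC hb
    have hg1 : g ≠ 1 := fun e => hD (by rw [← hgC, e]; rfl)
    have hh1 : h ≠ 1 := fun e => (inv_ne_one.mpr hD) (by rw [← hhC, e]; rfl)
    rw [mulA_single_single h0]
    by_cases hgh : h = g⁻¹
    · subst hgh
      rw [mul_inv_cancel, mem_fixSub]
      have hEc' : E D * (a * α g (b * e1 g⁻¹)) = a * α g (b * e1 g⁻¹) := by
        by_cases hg0 : e1 g = 0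
        · have hbz : b * e1 g⁻¹ = 0 := by rw [hez g hg0, mul_zero]
          rw [hbz, h0, mul_zero, mul_zero]
        · refine hEc D g _ ((hTmem D g).mpr ⟨hg1, hg0, hgC⟩) ?_
          rw [← mul_assoc, ha]
      constructor
      · rw [mulA_single_single h0, one_mul, inv_one, he1one, mul_one, halphaone, hEc']
      · rw [mulA_single_single h0, mul_one, inv_one, he1one, mul_one, halphaone,
          ← hEcen D, hEc']
    · rw [hc_zero g h b hb (fun e => hgh e.symm) hg1 hh1, mul_zero, DFinsupp.single_zero]
      exact zero_mem _
  -- left multiplication by δ_e is the identity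
  have oneleft : ∀ z : SkewA G R, mulA e1 α (DFinsupp.single 1 1) z = z := by
    intro z
    rw [mulA, DFinsupp.sum_single_index (by simp [DFinsupp.sum])]
    simp [halphaone, he1one, DFinsupp.sum_single]
  -- the fixed-point property for the trivial coset
  have hfix1 : ∀ z ∈ mulSubA e1 α (SC e1 N (1 : G ⧸ N)) (SC e1 N (1 : G ⧸ N)),
      mulA e1 α (DFinsupp.single 1 (1 : R)) z = z ∧
      mulA e1 α z (DFinsupp.single 1 (1 : R)) = z := by
    refine lift _ 1 1 ?_
    intro g a hgC ha h b hhC hb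
    rw [mulA_single_single h0, mem_fixSub]
    refine ⟨oneleft _, ?_⟩
    rw [mulA_single_single h0, mul_one]
    congr 1
    have h1 : α (g * h) ((1 : R) * e1 (g * h)⁻¹) = e1 (g * h) := by
      have h2 := hcond2 (g * h) 1
      simp only [he1one, mul_one, he1idem] at h2
      rw [one_mul]
      exact h2
    rw [h1, ← he1central (g * h)]
    exact hc_k g h a b hb
  -- assembling the statement
  intro C
  by_cases hC : C = 1
  · subst hC
    have honemem : DFinsupp.single (1 : G) (1 : R) ∈ SC e1 N (1 : G ⧸ N) :=
      AddSubgroup.subset_closure ⟨1, 1, rfl, by rw [he1one, one_mul], rfl⟩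
    have hst : mulA e1 α (DFinsupp.single (1 : G) (1 : R)) (DFinsupp.single 1 1)
        = DFinsupp.single 1 1 := by
      rw [mulA_single_single h0, one_mul, inv_one, he1one, mul_one, halphaone, one_mul]
    refine ⟨DFinsupp.single 1 1, honemem, DFinsupp.single 1 1, by rwa [inv_one], ?_, ?_⟩
    · rw [hst, inv_one]
      exact hfix1
    · rw [hst, inv_one]
      exact hfix1
  · refine ⟨sc C, hscmem C, sc C⁻¹, hscmem C⁻¹, ?_, ?_⟩
    · rw [hprod C hC]
      exact hfix C hC
    · have h2 := hprod C⁻¹ (inv_ne_one.mpr hC)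
      have h3 := hfix C⁻¹ (inv_ne_one.mpr hC)
      rw [inv_inv] at h2 h3
      rw [h2]
      exact h3

end
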